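/- Let Y be a nonempty finite set and q a probability distribution on Y with q(y) > 0 for all y. For f : Y → ℝ let p = softmax(f), i.e., p(y) = exp(f(y))/Σ_{k∈Y} exp(f(k)). Then for each j ∈ Y, the partial derivative of the reverse KL divergence f ↦ D_KL(softmax(f)‖q) with respect to the logit coordinate f(j) equals p(j)·( log(p(j)/q(j)) − D_KL(p‖q) ). -/

import Mathlib

open scoped BigOperators

/-- Softmax distribution attached to a vector of logits on a finite type. -/
noncomputable def softmax {Y : Type*} [Fintype Y] (f : Y → ℝ) (y : Y) : ℝ :=
  Real.exp (f y) / ∑ k, Real.exp (f k)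

/-- KL divergence between two distributions on a finite type,
with the convention `0 * log 0 = 0` (automatic since `0 * x = 0`). -/
noncomputable def KL {Y : Type*} [Fintype Y] (p q : Y → ℝ) : ℝ :=
  ∑ y, p y * Real.log (p y / q y)

/-- the partial derivative of the reverse KL divergence
`f ↦ D_KL(softmax f ‖ q)` with respect to the logit coordinate `f(j)` equals
`p(j)·( log(p(j)/q(j)) − D_KL(p‖q) )` with `p = softmax f`. -/
theorem reverse_KL_logit_partial_deriv
    {Y : Type*} [Fintype Y] [Nonempty Y] [DecidableEq Y]
    (q : Y → ℝ) (hq_pos : ∀ y, 0 < q y) (hq_sum : ∑ y, q y = 1)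
    (f : Y → ℝ) (j : Y) :
    HasDerivAt (fun s : ℝ => KL (softmax (Function.update f j s)) q)
      (softmax f j * (Real.log (softmax f j / q j) - KL (softmax f) q)) (f j) := by
  classical
  set S : ℝ := ∑ k, Real.exp (f k) with hS
  have hSpos : 0 < S := Finset.sum_pos (fun k _ => Real.exp_pos _) Finset.univ_nonempty
  have hppos : ∀ y, 0 < softmax f y := fun y => div_pos (Real.exp_pos _) hSpos
  set C : ℝ := ∑ k ∈ Finset.univ.erase j, Real.exp (f k) with hCdef
  have hC0 : 0 ≤ C := Finset.sum_nonneg (fun k _ => (Real.exp_pos _).le)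
  have hEs : ∀ s, (∑ k, Real.exp (Function.update f j s k)) = Real.exp s + C := by
    intro s
    have h : (fun k => Real.exp (Function.update f j s k))
        = Function.update (fun k => Real.exp (f k)) j (Real.exp s) := by
      funext k; by_cases hk : k = j <;> simp [hk, Function.update_apply]
    rw [h, Finset.sum_update_of_mem (Finset.mem_univ j)]
    congr 1
    rw [hCdef]
    congr 1
    ext k
    simp [Finset.mem_erase, Finset.mem_sdiff, and_comm]
  have hE' : HasDerivAt (fun s => ∑ k, Real.exp (Function.update f j s k)) (Real.exp (f j)) (f j) := by
    have h : (fun s => ∑ k, Real.exp (Function.update f j s k)) = fun s => Real.exp s + C :=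
      funext hEs
    rw [h]
    simpa using (Real.hasDerivAt_exp (f j)).add_const C
  have hEpos : ∀ s, 0 < (∑ k, Real.exp (Function.update f j s k)) := by
    intro s; rw [hEs]; exact add_pos_of_pos_of_nonneg (Real.exp_pos s) hC0
  have key : ∀ y, HasDerivAt
      (fun s => softmax (Function.update f j s) y * Real.log (softmax (Function.update f j s) y / q y))
      (softmax f y * ((if y = j then (1:ℝ) else 0) - softmax f j) *
        (Real.log (softmax f y / q y) + 1)) (f j) := by
    intro y
    have hA : HasDerivAt (fun s => Real.exp (Function.update f j s y))
        ((if y = j then (1:ℝ) else 0) * Real.exp (f j)) (f j) := by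
      by_cases hy : y = j
      · rw [if_pos hy, one_mul, hy]
        simp only [Function.update_self]
        exact Real.hasDerivAt_exp (f j)
      · simp only [Function.update_of_ne hy, if_neg hy, zero_mul]
        exact hasDerivAt_const _ _
    have hP : HasDerivAt (fun s => softmax (Function.update f j s) y)
        (softmax f y * ((if y = j then (1:ℝ) else 0) - softmax f j)) (f j) := by
      have h := hA.div hE' (hEpos (f j)).ne'
      simp only [Function.update_eq_self, Pi.div_def] at h
      refine HasDerivAt.congr_deriv h ?_
      by_cases hy : y = j
      · rw [hy, if_pos rfl]
        simp only [softmax, ← hS]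
        field_simp
      · simp only [softmax, if_neg hy, ← hS]
        field_simp
        ring
    have hqne : q y ≠ 0 := (hq_pos y).ne'
    have hPne : softmax f y ≠ 0 := (hppos y).ne'
    have hlog : HasDerivAt (fun s => Real.log (softmax (Function.update f j s) y / q y))
        ((softmax f y * ((if y = j then (1:ℝ) else 0) - softmax f j) / q y) / (softmax f y / q y)) (f j) := by
      have h1 := (hP.div_const (q y)).log
        (by rw [Function.update_eq_self]; exact (div_pos (hppos y) (hq_pos y)).ne')
      rw [Function.update_eq_self] at h1
      exact h1
    have h := hP.mul hlog
    rw [Function.update_eq_self] at h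
    refine HasDerivAt.congr_deriv h ?_
    field_simp
  have hsum := HasDerivAt.sum (fun y (_ : y ∈ Finset.univ) => key y)
  have hpsum : ∑ y, softmax f y = 1 := by
    simp only [softmax, ← Finset.sum_div, ← hS]
    exact div_self hSpos.ne'
  have hval : (∑ y, softmax f y * ((if y = j then (1:ℝ) else 0) - softmax f j) *
        (Real.log (softmax f y / q y) + 1))
      = softmax f j * (Real.log (softmax f j / q j) - KL (softmax f) q) := by
    have h1 : ∀ y, softmax f y * ((if y = j then (1:ℝ) else 0) - softmax f j) *
        (Real.log (softmax f y / q y) + 1)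
        = (if y = j then softmax f y * (Real.log (softmax f y / q y) + 1) else 0)
          - softmax f j * (softmax f y * Real.log (softmax f y / q y) + softmax f y) := by
      intro y; by_cases hy : y = j <;> simp [hy] <;> ring
    rw [Finset.sum_congr rfl (fun y _ => h1 y), Finset.sum_sub_distrib,
      Finset.sum_ite_eq' Finset.univ j, if_pos (Finset.mem_univ j),
      ← Finset.mul_sum, Finset.sum_add_distrib, hpsum]
    rw [show (∑ y, softmax f y * Real.log (softmax f y / q y)) = KL (softmax f) q from rfl]
    ring
  rw [show (fun s : ℝ => KL (softmax (Function.update f j s)) q)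
      = fun s => ∑ y, softmax (Function.update f j s) y *
          Real.log (softmax (Function.update f j s) y / q y) from rfl]
  rw [← hval]
  simpa only [Finset.sum_fn] using hsum
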